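/- Let φ: G → Ḡ be a surjective group homomorphism whose kernel is a verbal subgroup of G (i.e., generated by all values in G of some set of words). If H is verbally closed in G, then φ(H) is verbally closed in Ḡ. -/

import Mathlib

/-- A subgroup `H` of `G` is *verbally closed* if every coefficient-free equation
`w(x₁,…,xₙ) = h` with `h ∈ H` that has a solution in `G` also has a solution in `H`. -/
def VerballyClosed {G : Type*} [Group G] (H : Subgroup G) : Prop :=
  ∀ (n : ℕ) (w : FreeGroup (Fin n)) (h : G), h ∈ H →
    (∃ x : Fin n → G, FreeGroup.lift x w = h) →
    ∃ x : Fin n → G, (∀ i, x i ∈ H) ∧ FreeGroup.lift x w = h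

private theorem lift_map_aux {α β : Type*} {G : Type*} [Group G] (f : α → β) (x : β → G)
    (v : FreeGroup α) :
    FreeGroup.lift x (FreeGroup.map f v) = FreeGroup.lift (x ∘ f) v := by
  have : (FreeGroup.lift x).comp (FreeGroup.map f) = FreeGroup.lift (x ∘ f) := by
    apply FreeGroup.ext_hom
    intro a
    simp
  exact DFunLike.congr_fun this v

private theorem map_map_aux {α β γ : Type*} (f : α → β) (g : β → γ) (v : FreeGroup α) :
    FreeGroup.map g (FreeGroup.map f v) = FreeGroup.map (g ∘ f) v := by
  have : (FreeGroup.map g).comp (FreeGroup.map f) = FreeGroup.map (g ∘ f) := by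
    apply FreeGroup.ext_hom
    intro a
    simp
  exact DFunLike.congr_fun this v

private theorem hom_lift_aux {α : Type*} {G Gbar : Type*} [Group G] [Group Gbar]
    (φ : G →* Gbar) (f : α → G) (v : FreeGroup α) :
    φ (FreeGroup.lift f v) = FreeGroup.lift (φ ∘ f) v := by
  have : φ.comp (FreeGroup.lift f) = FreeGroup.lift (φ ∘ f) := by
    apply FreeGroup.ext_hom
    intro a
    simp
  exact DFunLike.congr_fun this v

private theorem exists_fin_word (v : FreeGroup ℕ) :
    ∃ (m : ℕ) (v' : FreeGroup (Fin m)), FreeGroup.map (Fin.val) v' = v := by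
  induction v using FreeGroup.induction_on with
  | C1 => exact ⟨0, 1, by simp⟩
  | of i => exact ⟨i + 1, FreeGroup.of ⟨i, Nat.lt_succ_self i⟩, by rw [FreeGroup.map.of]⟩
  | inv_of i _ =>
    exact ⟨i + 1, (FreeGroup.of ⟨i, Nat.lt_succ_self i⟩)⁻¹, by
      rw [map_inv, FreeGroup.map.of]⟩
  | mul a b ha hb =>
    obtain ⟨m₁, v₁, hv₁⟩ := ha
    obtain ⟨m₂, v₂, hv₂⟩ := hb
    refine ⟨max m₁ m₂,
      FreeGroup.map (Fin.castLE (le_max_left m₁ m₂)) v₁ *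
        FreeGroup.map (Fin.castLE (le_max_right m₁ m₂)) v₂, ?_⟩
    rw [map_mul, map_map_aux, map_map_aux]
    have h1 : (Fin.val : Fin (max m₁ m₂) → ℕ) ∘ Fin.castLE (le_max_left m₁ m₂)
        = (Fin.val : Fin m₁ → ℕ) := rfl
    have h2 : (Fin.val : Fin (max m₁ m₂) → ℕ) ∘ Fin.castLE (le_max_right m₁ m₂)
        = (Fin.val : Fin m₂ → ℕ) := rfl
    rw [h1, h2, hv₁, hv₂]

/-- If the kernel of an epimorphism is a verbal subgroup, images of verbally closed
subgroups are verbally closed. -/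
theorem verballyClosed_map {G Gbar : Type*} [Group G] [Group Gbar] (φ : G →* Gbar)
    (hsurj : Function.Surjective φ) (V : Set (FreeGroup ℕ))
    (hker : φ.ker = Subgroup.closure
      {g : G | ∃ w ∈ V, ∃ x : ℕ → G, FreeGroup.lift x w = g})
    (H : Subgroup G) (hvc : VerballyClosed H) :
    VerballyClosed (H.map φ) := by
  intro n w hbar hbarmem ⟨xbar, hxbar⟩
  obtain ⟨h, hH, rfl⟩ := hbarmem
  choose x hx using fun i => hsurj (xbar i)
  have hphix : φ (FreeGroup.lift x w) = φ h := by
    rw [← hxbar, hom_lift_aux, show ⇑φ ∘ x = xbar from funext hx]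
  have hk : (FreeGroup.lift x w) * h⁻¹ ∈ φ.ker := by
    simp [MonoidHom.mem_ker, hphix]
  rw [hker] at hk
  have key : ∀ k ∈ Subgroup.closure
      {g : G | ∃ w ∈ V, ∃ x : ℕ → G, FreeGroup.lift x w = g},
      ∃ (m : ℕ) (w' : FreeGroup (Fin m)) (z : Fin m → G),
        FreeGroup.lift z w' = k ∧ ∀ y : Fin m → G, φ (FreeGroup.lift y w') = 1 := by
    intro k hkmem
    induction hkmem using Subgroup.closure_induction with
    | mem g hg =>
      obtain ⟨v, hv, xv, hxv⟩ := hg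
      obtain ⟨m, v', hv'⟩ := exists_fin_word v
      refine ⟨m, v', xv ∘ Fin.val, ?_, ?_⟩
      · rw [← hxv, ← hv', lift_map_aux]
      · intro y
        set yhat : ℕ → G := fun i => if hi : i < m then y ⟨i, hi⟩ else 1 with hyhat
        have hyv : FreeGroup.lift y v' = FreeGroup.lift yhat v := by
          rw [← hv', lift_map_aux]
          have : yhat ∘ Fin.val = y := by
            funext i
            simp [hyhat, i.isLt]
          rw [this]
        rw [hyv, ← MonoidHom.mem_ker, hker]
        exact Subgroup.subset_closure ⟨v, hv, yhat, rfl⟩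
    | one => exact ⟨0, 1, fun _ => 1, by simp, by simp⟩
    | mul a b _ _ ha hb =>
      obtain ⟨m₁, w₁, z₁, hz₁, hk₁⟩ := ha
      obtain ⟨m₂, w₂, z₂, hz₂, hk₂⟩ := hb
      refine ⟨m₁ + m₂,
        FreeGroup.map (Fin.castAdd m₂) w₁ * FreeGroup.map (Fin.natAdd m₁) w₂,
        Fin.addCases z₁ z₂, ?_, ?_⟩
      · rw [map_mul, lift_map_aux, lift_map_aux]
        have e1 : (Fin.addCases z₁ z₂ : Fin (m₁ + m₂) → G) ∘ Fin.castAdd m₂ = z₁ := by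
          funext i; simp
        have e2 : (Fin.addCases z₁ z₂ : Fin (m₁ + m₂) → G) ∘ Fin.natAdd m₁ = z₂ := by
          funext i; simp
        rw [e1, e2, hz₁, hz₂]
      · intro y
        rw [map_mul, map_mul, lift_map_aux, lift_map_aux, hk₁, hk₂, one_mul]
    | inv a _ ha =>
      obtain ⟨m, w', z, hz, hk'⟩ := ha
      exact ⟨m, w'⁻¹, z, by simp [hz], fun y => by simp [hk']⟩
  obtain ⟨m, w', z, hz, hkerw'⟩ := key _ hk
  set u : FreeGroup (Fin (m + n)) :=
    (FreeGroup.map (Fin.castAdd n) w')⁻¹ * FreeGroup.map (Fin.natAdd m) w with hu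
  have husol : FreeGroup.lift (Fin.addCases z x : Fin (m + n) → G) u = h := by
    rw [hu, map_mul, map_inv, lift_map_aux, lift_map_aux]
    have e1 : (Fin.addCases z x : Fin (m + n) → G) ∘ Fin.castAdd n = z := by
      funext i; simp
    have e2 : (Fin.addCases z x : Fin (m + n) → G) ∘ Fin.natAdd m = x := by
      funext i; simp
    rw [e1, e2, hz]
    group
  obtain ⟨y, hyH, hy⟩ := hvc (m + n) u h hH ⟨_, husol⟩
  refine ⟨fun i => φ (y (Fin.natAdd m i)), fun i => ⟨y (Fin.natAdd m i), hyH _, rfl⟩, ?_⟩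
  have h2 : φ (FreeGroup.lift y u) = φ h := by rw [hy]
  simp only [hu, map_mul, map_inv, lift_map_aux] at h2
  rw [hkerw', inv_one, one_mul, hom_lift_aux] at h2
  exact h2
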